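/- Let $h$ be supermultiplicative, $w_1,\dots,w_n>0$ with $W_n=\sum_{k=1}^n w_k$, and let $f:I\to(0,\infty)$ be $G_tA_h$-convex. Then $f\Big(\prod_{k=1}^n x_k^{w_k/W_n}\Big)\le \sum_{k=1}^n h(w_k/W_n) f(x_k)$ for all $x_1,\dots,x_n\in I$, $n\ge 2$. -/

import Mathlib

open Real Set Finset

private lemma geo_mem (I : Set ℝ) (hI : I ⊆ Ioi 0)
    (hIgeo : ∀ a ∈ I, ∀ b ∈ I, ∀ t ∈ Icc (0:ℝ) 1, a ^ t * b ^ (1 - t) ∈ I)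
    (n : ℕ) (hn : 1 ≤ n) (w : Fin n → ℝ) (hw : ∀ k, 0 < w k)
    (x : Fin n → ℝ) (hx : ∀ k, x k ∈ I) :
    (∏ k, x k ^ (w k / (∑ k, w k))) ∈ I := by
  induction n, hn using Nat.le_induction with
  | base =>
    simpa [Fin.prod_univ_one, Fin.sum_univ_one, div_self (hw 0).ne'] using hx 0
  | succ n hn ih =>
    have hW' : 0 < ∑ k : Fin n, w k.castSucc :=
      Finset.sum_pos (fun k _ => hw _) (by simp [Finset.univ_nonempty_iff, Fin.pos_iff_nonempty.mp hn])
    have hW : 0 < ∑ k : Fin (n+1), w k := Finset.sum_pos (fun k _ => hw _) (by simp)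
    set W' := ∑ k : Fin n, w k.castSucc with hW'def
    set W := ∑ k : Fin (n+1), w k with hWdef
    have hsum : W = W' + w (Fin.last n) := Fin.sum_univ_castSucc w
    have hxpos : ∀ k, (0:ℝ) < x k := fun k => hI (hx k)
    have hG' : (∏ k : Fin n, x k.castSucc ^ (w k.castSucc / W')) ∈ I :=
      ih (fun k => w k.castSucc) (fun k => hw _) (fun k => x k.castSucc) (fun k => hx _)
    have ht : W' / W ∈ Icc (0:ℝ) 1 := by
      constructor
      · positivity
      · rw [div_le_one hW]
        rw [hsum]; linarith [hw (Fin.last n)]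
    have h1t : 1 - W' / W = w (Fin.last n) / W := by
      field_simp
      linarith [hsum]
    have key : (∏ k : Fin (n+1), x k ^ (w k / W)) =
        (∏ k : Fin n, x k.castSucc ^ (w k.castSucc / W')) ^ (W' / W) *
          x (Fin.last n) ^ (1 - W' / W) := by
      rw [h1t, Fin.prod_univ_castSucc (fun k : Fin (n+1) => x k ^ (w k / W)),
        ← Real.finset_prod_rpow _ _ (fun i _ => (Real.rpow_pos_of_pos (hxpos i.castSucc) _).le)]
      congr 1
      apply Finset.prod_congr rfl
      intro k _
      rw [← Real.rpow_mul (hxpos k.castSucc).le]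
      congr 1
      field_simp
    rw [key]
    exact hIgeo _ hG' _ (hx (Fin.last n)) _ ht

theorem jensen_GtAh (I : Set ℝ) (hI : I ⊆ Ioi 0)
    (hIgeo : ∀ a ∈ I, ∀ b ∈ I, ∀ t ∈ Icc (0:ℝ) 1, a ^ t * b ^ (1 - t) ∈ I)
    (h : ℝ → ℝ) (hpos : ∀ t ∈ Ioc (0:ℝ) 1, 0 < h t)
    (hsuper : ∀ x ∈ Ioc (0:ℝ) 1, ∀ y ∈ Ioc (0:ℝ) 1, h x * h y ≤ h (x * y))
    (f : ℝ → ℝ) (hfpos : ∀ x ∈ I, 0 < f x)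
    (hconv : ∀ a ∈ I, ∀ b ∈ I, ∀ t ∈ Icc (0:ℝ) 1,
      f (a ^ t * b ^ (1 - t)) ≤ h t * f a + h (1 - t) * f b)
    (n : ℕ) (hn : 2 ≤ n) (w : Fin n → ℝ) (hw : ∀ k, 0 < w k)
    (x : Fin n → ℝ) (hx : ∀ k, x k ∈ I) :
    f (∏ k, x k ^ (w k / (∑ k, w k))) ≤
      ∑ k, h (w k / (∑ k, w k)) * f (x k) := by
  induction n, hn using Nat.le_induction with
  | base =>
    have hW : (0:ℝ) < w 0 + w 1 := by linarith [hw 0, hw 1]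
    have hsum : (∑ k : Fin 2, w k) = w 0 + w 1 := Fin.sum_univ_two w
    have ht : w 0 / (w 0 + w 1) ∈ Icc (0:ℝ) 1 := by
      constructor
      · exact div_nonneg (hw 0).le hW.le
      · rw [div_le_one hW]; linarith [hw 1]
    have h1t : 1 - w 0 / (w 0 + w 1) = w 1 / (w 0 + w 1) := by
      field_simp
      ring
    have := hconv _ (hx 0) _ (hx 1) _ ht
    rw [h1t] at this
    simpa [Fin.prod_univ_two, Fin.sum_univ_two] using this
  | succ n hn ih =>
    have hone : 1 ≤ n := le_trans (by norm_num) hn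
    have hW' : 0 < ∑ k : Fin n, w k.castSucc :=
      Finset.sum_pos (fun k _ => hw _)
        (by simp [Finset.univ_nonempty_iff, Fin.pos_iff_nonempty.mp hone])
    have hW : 0 < ∑ k : Fin (n+1), w k := Finset.sum_pos (fun k _ => hw _) (by simp)
    set W' := ∑ k : Fin n, w k.castSucc with hW'def
    set W := ∑ k : Fin (n+1), w k with hWdef
    have hsum : W = W' + w (Fin.last n) := Fin.sum_univ_castSucc w
    have hxpos : ∀ k, (0:ℝ) < x k := fun k => hI (hx k)
    have hG' : (∏ k : Fin n, x k.castSucc ^ (w k.castSucc / W')) ∈ I :=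
      geo_mem I hI hIgeo n hone (fun k => w k.castSucc) (fun k => hw _)
        (fun k => x k.castSucc) (fun k => hx _)
    have ht : W' / W ∈ Icc (0:ℝ) 1 := by
      constructor
      · exact div_nonneg hW'.le hW.le
      · rw [div_le_one hW]; rw [hsum]; linarith [hw (Fin.last n)]
    have htIoc : W' / W ∈ Ioc (0:ℝ) 1 := ⟨div_pos hW' hW, ht.2⟩
    have h1t : 1 - W' / W = w (Fin.last n) / W := by
      field_simp; linarith [hsum]
    have key : (∏ k : Fin (n+1), x k ^ (w k / W)) =
        (∏ k : Fin n, x k.castSucc ^ (w k.castSucc / W')) ^ (W' / W) *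
          x (Fin.last n) ^ (1 - W' / W) := by
      rw [h1t, Fin.prod_univ_castSucc (fun k : Fin (n+1) => x k ^ (w k / W)),
        ← Real.finset_prod_rpow _ _ (fun i _ => (Real.rpow_pos_of_pos (hxpos i.castSucc) _).le)]
      congr 1
      apply Finset.prod_congr rfl
      intro k _
      rw [← Real.rpow_mul (hxpos k.castSucc).le]
      congr 1
      field_simp
    have step1 : f (∏ k : Fin (n+1), x k ^ (w k / W)) ≤
        h (W' / W) * f (∏ k : Fin n, x k.castSucc ^ (w k.castSucc / W')) +
          h (1 - W' / W) * f (x (Fin.last n)) := by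
      rw [key]; exact hconv _ hG' _ (hx (Fin.last n)) _ ht
    have step2 : f (∏ k : Fin n, x k.castSucc ^ (w k.castSucc / W')) ≤
        ∑ k : Fin n, h (w k.castSucc / W') * f (x k.castSucc) :=
      ih (fun k => w k.castSucc) (fun k => hw _) (fun k => x k.castSucc) (fun k => hx _)
    have hhpos : 0 < h (W' / W) := hpos _ htIoc
    have step3 : h (W' / W) * (∑ k : Fin n, h (w k.castSucc / W') * f (x k.castSucc)) ≤
        ∑ k : Fin n, h (w k.castSucc / W) * f (x k.castSucc) := by
      rw [Finset.mul_sum]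
      apply Finset.sum_le_sum
      intro k _
      have hki : w k.castSucc / W' ∈ Ioc (0:ℝ) 1 := by
        constructor
        · exact div_pos (hw _) hW'
        · rw [div_le_one hW']
          exact Finset.single_le_sum (fun i _ => (hw i.castSucc).le) (Finset.mem_univ k)
      have hmul : (W' / W) * (w k.castSucc / W') = w k.castSucc / W := by
        field_simp
      have := hsuper _ htIoc _ hki
      rw [hmul] at this
      calc h (W' / W) * (h (w k.castSucc / W') * f (x k.castSucc))
          = (h (W' / W) * h (w k.castSucc / W')) * f (x k.castSucc) := by ring
        _ ≤ h (w k.castSucc / W) * f (x k.castSucc) :=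
            mul_le_mul_of_nonneg_right this (hfpos _ (hx _)).le
    rw [Fin.sum_univ_castSucc (fun k : Fin (n+1) => h (w k / W) * f (x k))]
    calc f (∏ k : Fin (n+1), x k ^ (w k / W))
        ≤ h (W' / W) * f (∏ k : Fin n, x k.castSucc ^ (w k.castSucc / W')) +
            h (1 - W' / W) * f (x (Fin.last n)) := step1
      _ ≤ h (W' / W) * (∑ k : Fin n, h (w k.castSucc / W') * f (x k.castSucc)) +
            h (1 - W' / W) * f (x (Fin.last n)) := by
          gcongr
      _ ≤ (∑ k : Fin n, h (w k.castSucc / W) * f (x k.castSucc)) +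
            h (w (Fin.last n) / W) * f (x (Fin.last n)) := by
          rw [h1t]; exact add_le_add step3 le_rfl
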